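/- Let 𝓑 be a partition of Ω and let κ be a closure operator in K_d such that E_κ(G) ⊆ E_{κ₁}(G) for every G ⊆ L, where κ₁(G) := posi(G). Let D_𝓑 ⊆ L_𝓑 be κ₁-coherent relative to L_𝓑, for each B ∈ 𝓑 let D|B ⊆ L|B be κ₁-coherent relative to L|B, and set D|𝓑 := {f ∈ L : f ≠ 0 and for every B ∈ 𝓑, 1_B·f ∈ D|B ∪ {0}}. Then the marginal extension D' := E_κ(D_𝓑 ∪ D|𝓑) satisfies D' ∩ L_𝓑 = D_𝓑 and D' ∩ L|B = D|B for every B ∈ 𝓑. -/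

import Mathlib

open Set

/-- The set of gambles: bounded real-valued functions on `Ω`. -/
def Gambles (Ω : Type*) : Set (Ω → ℝ) := {f | ∃ M : ℝ, ∀ ω, |f ω| ≤ M}

/-- `L⁺`: the positive gambles. -/
def Lpos (Ω : Type*) : Set (Ω → ℝ) := {f ∈ Gambles Ω | 0 ≤ f ∧ f ≠ 0}

/-- `L⁻₀`: the nonpositive gambles. -/
def Lneg0 (Ω : Type*) : Set (Ω → ℝ) := {f ∈ Gambles Ω | f ≤ 0}

/-- A closure operator on the subsets of the set of gambles. -/
structure IsClosureOp (Ω : Type*) (κ : Set (Ω → ℝ) → Set (Ω → ℝ)) : Prop where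
  maps_to : ∀ D ⊆ Gambles Ω, κ D ⊆ Gambles Ω
  extensive : ∀ D ⊆ Gambles Ω, D ⊆ κ D
  mono : ∀ ⦃D D' : Set (Ω → ℝ)⦄, D ⊆ Gambles Ω → D' ⊆ Gambles Ω → D ⊆ D' → κ D ⊆ κ D'
  idem : ∀ D ⊆ Gambles Ω, κ (κ D) = κ D

/-- Natural extension `E_κ(D) = κ(D ∪ L⁺)`. -/
def natExt {Ω : Type*} (κ : Set (Ω → ℝ) → Set (Ω → ℝ)) (D : Set (Ω → ℝ)) : Set (Ω → ℝ) :=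
  κ (D ∪ Lpos Ω)

/-- `D` avoids partial loss: `L⁻₀ ∩ E_κ(D) = ∅`. -/
def AvoidsPartialLoss {Ω : Type*} (κ : Set (Ω → ℝ) → Set (Ω → ℝ)) (D : Set (Ω → ℝ)) : Prop :=
  Lneg0 Ω ∩ natExt κ D = ∅

/-- `D` is κ-coherent relative to `Q`. -/
def CoherentRel {Ω : Type*} (κ : Set (Ω → ℝ) → Set (Ω → ℝ)) (Q D : Set (Ω → ℝ)) : Prop :=
  AvoidsPartialLoss κ D ∧ Q ∩ natExt κ D ⊆ D

/-- `D` is κ-coherent: `κ(D ∪ L⁺) = D` and `D ∩ L⁻₀ = ∅`. -/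
def Coherent {Ω : Type*} (κ : Set (Ω → ℝ) → Set (Ω → ℝ)) (D : Set (Ω → ℝ)) : Prop :=
  D ⊆ Gambles Ω ∧ κ (D ∪ Lpos Ω) = D ∧ D ∩ Lneg0 Ω = ∅

/-- A set of gambles is closed under dominance. -/
def ClosedUnderDominance {Ω : Type*} (G : Set (Ω → ℝ)) : Prop :=
  G = {g | g ∈ Gambles Ω ∧ ∃ f ∈ G, f ≤ g}

/-- `K_d`: closure operators all of whose coherent sets are closed under dominance. -/
def InKd {Ω : Type*} (κ : Set (Ω → ℝ) → Set (Ω → ℝ)) : Prop :=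
  IsClosureOp Ω κ ∧ ∀ D : Set (Ω → ℝ), Coherent κ D → ClosedUnderDominance D

/-- Lower prevision induced by `D`: `P_D(f) = sup {μ : f - μ ∈ D}`. -/
noncomputable def lowPrev {Ω : Type*} (D : Set (Ω → ℝ)) (f : Ω → ℝ) : ℝ :=
  sSup {μ : ℝ | (f - fun _ => μ) ∈ D}

/-- Upper prevision induced by `D`: `Q_D(f) = inf {μ : μ - f ∈ D}`. -/
noncomputable def upPrev {Ω : Type*} (D : Set (Ω → ℝ)) (f : Ω → ℝ) : ℝ :=
  sInf {μ : ℝ | ((fun _ => μ) - f) ∈ D}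

/-- `posi(G)`: positive linear combinations of elements of `G`; this is the linear
closure operator `κ₁`. -/
def posi {Ω : Type*} (G : Set (Ω → ℝ)) : Set (Ω → ℝ) :=
  {g | ∃ (n : ℕ) (f : Fin (n + 1) → Ω → ℝ) (l : Fin (n + 1) → ℝ),
    (∀ i, f i ∈ G) ∧ (∀ i, 0 < l i) ∧ g = ∑ i, l i • f i}

/-- `L_𝓑`: the gambles that are constant on every element of the partition `𝓑`. -/
def Lmeas {Ω : Type*} (𝓑 : Set (Set Ω)) : Set (Ω → ℝ) :=
  {f ∈ Gambles Ω | ∀ B ∈ 𝓑, ∀ ω ∈ B, ∀ ω' ∈ B, f ω = f ω'}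

/-- `L|B`: the gambles vanishing outside `B`, i.e. with `f = 1_B·f`. -/
def Lcond {Ω : Type*} (B : Set Ω) : Set (Ω → ℝ) :=
  {f ∈ Gambles Ω | f = B.indicator f}

/-- `D|𝓑`: the nonzero gambles `f` with `1_B·f ∈ D|B ∪ {0}` for every `B ∈ 𝓑`. -/
def condAgg {Ω : Type*} (𝓑 : Set (Set Ω)) (Dc : Set Ω → Set (Ω → ℝ)) : Set (Ω → ℝ) :=
  {f | f ∈ Gambles Ω ∧ f ≠ 0 ∧ ∀ B ∈ 𝓑, B.indicator f ∈ Dc B ∪ {0}}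

section Aux
variable {Ω : Type*}

lemma zero_gamble : (0 : Ω → ℝ) ∈ Gambles Ω := ⟨0, by simp⟩

lemma gambles_add {f g : Ω → ℝ} (hf : f ∈ Gambles Ω) (hg : g ∈ Gambles Ω) :
    f + g ∈ Gambles Ω := by
  obtain ⟨M, hM⟩ := hf; obtain ⟨N, hN⟩ := hg
  exact ⟨M + N, fun ω => (abs_add_le _ _).trans (add_le_add (hM ω) (hN ω))⟩

lemma gambles_smul {f : Ω → ℝ} (hf : f ∈ Gambles Ω) (c : ℝ) : c • f ∈ Gambles Ω := by
  obtain ⟨M, hM⟩ := hf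
  refine ⟨|c| * M, fun ω => ?_⟩
  simp only [Pi.smul_apply, smul_eq_mul, abs_mul]
  exact mul_le_mul_of_nonneg_left (hM ω) (abs_nonneg c)

lemma gambles_sub {f g : Ω → ℝ} (hf : f ∈ Gambles Ω) (hg : g ∈ Gambles Ω) :
    f - g ∈ Gambles Ω := by
  have := gambles_add hf (gambles_smul hg (-1))
  simpa [sub_eq_add_neg, neg_one_smul] using this

lemma gambles_sum {ι : Type*} (s : Finset ι) (f : ι → Ω → ℝ)
    (h : ∀ i ∈ s, f i ∈ Gambles Ω) : (∑ i ∈ s, f i) ∈ Gambles Ω :=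
  Finset.sum_induction f (· ∈ Gambles Ω) (fun _ _ => gambles_add) zero_gamble h

lemma gambles_indicator {f : Ω → ℝ} (hf : f ∈ Gambles Ω) (B : Set Ω) :
    B.indicator f ∈ Gambles Ω := by
  obtain ⟨M, hM⟩ := hf
  refine ⟨|M|, fun ω => ?_⟩
  by_cases h : ω ∈ B
  · simp only [Set.indicator_of_mem h]
    exact (hM ω).trans (le_abs_self M)
  · simp [Set.indicator_of_notMem h]

lemma posi_gambles {G : Set (Ω → ℝ)} (hG : G ⊆ Gambles Ω) : posi G ⊆ Gambles Ω := by
  rintro g ⟨n, f, l, hf, hl, rfl⟩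
  exact gambles_sum _ _ fun i _ => gambles_smul (hG (hf i)) _

lemma mem_posi_single {G : Set (Ω → ℝ)} {g} (hg : g ∈ G) : g ∈ posi G :=
  ⟨0, fun _ => g, fun _ => 1, fun _ => hg, fun _ => one_pos, by simp⟩

lemma posi_mono {G G' : Set (Ω → ℝ)} (h : G ⊆ G') : posi G ⊆ posi G' := by
  rintro g ⟨n, f, l, hf, hl, rfl⟩
  exact ⟨n, f, l, fun i => h (hf i), hl, rfl⟩

lemma add_mem_posi {G : Set (Ω → ℝ)} {a b} (ha : a ∈ posi G) (hb : b ∈ posi G) :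
    a + b ∈ posi G := by
  obtain ⟨n, f, l, hf, hl, rfl⟩ := ha
  obtain ⟨m, f', l', hf', hl', rfl⟩ := hb
  refine ⟨n + 1 + m, Fin.append (m := n+1) (n := m+1) f f',
    Fin.append (m := n+1) (n := m+1) l l', ?_, ?_, ?_⟩
  · intro i
    refine Fin.addCases (m := n+1) (n := m+1) (fun j => ?_) (fun j => ?_) i
    · rw [Fin.append_left]; exact hf j
    · rw [Fin.append_right]; exact hf' j
  · intro i
    refine Fin.addCases (m := n+1) (n := m+1) (fun j => ?_) (fun j => ?_) i
    · rw [Fin.append_left]; exact hl j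
    · rw [Fin.append_right]; exact hl' j
  · have h := Fin.sum_univ_add (M := Ω → ℝ)
      (f := fun i : Fin ((n+1)+(m+1)) => Fin.append l l' i • Fin.append f f' i)
    refine Eq.trans ?_ h.symm
    congr 1
    · exact Finset.sum_congr rfl fun j _ => by rw [Fin.append_left, Fin.append_left]
    · exact Finset.sum_congr rfl fun j _ => by rw [Fin.append_right, Fin.append_right]

lemma sum_mem_posi {ι : Type*} {G : Set (Ω → ℝ)} {s : Finset ι} (hs : s.Nonempty)
    {f : ι → Ω → ℝ} (hf : ∀ i ∈ s, f i ∈ posi G) : (∑ i ∈ s, f i) ∈ posi G := by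
  induction hs using Finset.Nonempty.cons_induction with
  | singleton i => simpa using hf i (by simp)
  | cons i s hi hs ih =>
    rw [Finset.sum_cons]
    exact add_mem_posi (hf i (by simp)) (ih fun j hj => hf j (by simp [hj]))

lemma smul_mem_posi {G : Set (Ω → ℝ)} {g} (hg : g ∈ posi G) {c : ℝ} (hc : 0 < c) :
    c • g ∈ posi G := by
  obtain ⟨n, f, l, hf, hl, rfl⟩ := hg
  refine ⟨n, f, fun i => c * l i, hf, fun i => mul_pos hc (hl i), ?_⟩
  rw [Finset.smul_sum]
  exact Finset.sum_congr rfl fun i _ => by rw [smul_smul]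

end Aux
section Aux2
variable {Ω : Type*}

open Classical in
/-- Decomposition of a `posi` of a triple union. -/
lemma posi_decomp3 {A B C : Set (Ω → ℝ)} {g : Ω → ℝ} (hg : g ∈ posi (A ∪ B ∪ C)) :
    ∃ a b c : Ω → ℝ, (a = 0 ∨ a ∈ posi A) ∧ (b = 0 ∨ b ∈ posi B) ∧ (c = 0 ∨ c ∈ posi C) ∧
      (a ∈ posi A ∨ b ∈ posi B ∨ c ∈ posi C) ∧ g = a + b + c := by
  obtain ⟨n, f, l, hf, hl, rfl⟩ := hg
  set T : Fin (n+1) → Ω → ℝ := fun i => l i • f i with hT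
  set sA : Finset (Fin (n+1)) := Finset.univ.filter (fun i => f i ∈ A) with hsA
  set sB : Finset (Fin (n+1)) := Finset.univ.filter (fun i => f i ∉ A ∧ f i ∈ B) with hsB
  set sC : Finset (Fin (n+1)) := Finset.univ.filter (fun i => f i ∉ A ∧ f i ∉ B) with hsC
  have hsum : ∑ i, T i = (∑ i ∈ sA, T i) + (∑ i ∈ sB, T i) + (∑ i ∈ sC, T i) := by
    rw [← Finset.sum_filter_add_sum_filter_not Finset.univ (fun i => f i ∈ A) T]
    rw [← Finset.sum_filter_add_sum_filter_not
      (Finset.univ.filter (fun i => f i ∉ A)) (fun i => f i ∈ B) T]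
    rw [Finset.filter_filter, Finset.filter_filter]
    ring_nf
    rfl
  have hmemA : ∀ i ∈ sA, T i ∈ posi A := fun i hi => by
    have : f i ∈ A := (Finset.mem_filter.1 hi).2
    exact smul_mem_posi (mem_posi_single this) (hl i)
  have hmemB : ∀ i ∈ sB, T i ∈ posi B := fun i hi => by
    have : f i ∈ B := (Finset.mem_filter.1 hi).2.2
    exact smul_mem_posi (mem_posi_single this) (hl i)
  have hmemC : ∀ i ∈ sC, T i ∈ posi C := fun i hi => by
    have h' := (Finset.mem_filter.1 hi).2
    have : f i ∈ C := by rcases hf i with (h | h) | h <;> tauto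
    exact smul_mem_posi (mem_posi_single this) (hl i)
  refine ⟨∑ i ∈ sA, T i, ∑ i ∈ sB, T i, ∑ i ∈ sC, T i, ?_, ?_, ?_, ?_, hsum⟩
  · rcases Finset.eq_empty_or_nonempty sA with h | h
    · left; simp [h]
    · right; exact sum_mem_posi h hmemA
  · rcases Finset.eq_empty_or_nonempty sB with h | h
    · left; simp [h]
    · right; exact sum_mem_posi h hmemB
  · rcases Finset.eq_empty_or_nonempty sC with h | h
    · left; simp [h]
    · right; exact sum_mem_posi h hmemC
  · have h0 : (0 : Fin (n+1)) ∈ sA ∪ sB ∪ sC := by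
      simp only [hsA, hsB, hsC, Finset.mem_union, Finset.mem_filter, Finset.mem_univ, true_and]
      tauto
    rcases Finset.mem_union.1 h0 with h0 | h0
    · rcases Finset.mem_union.1 h0 with h0 | h0
      · exact Or.inl (sum_mem_posi ⟨0, h0⟩ hmemA)
      · exact Or.inr (Or.inl (sum_mem_posi ⟨0, h0⟩ hmemB))
    · exact Or.inr (Or.inr (sum_mem_posi ⟨0, h0⟩ hmemC))

/-- posi of Lpos is inside Lpos. -/
lemma posi_Lpos : posi (Lpos Ω) ⊆ Lpos Ω := by
  rintro g ⟨n, f, l, hf, hl, rfl⟩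
  have hge : ∀ i, (0 : Ω → ℝ) ≤ f i := fun i => (hf i).2.1
  have hnonneg : (0 : Ω → ℝ) ≤ ∑ i, l i • f i := by
    intro ω
    simp only [Finset.sum_apply, Pi.zero_apply, Pi.smul_apply, smul_eq_mul]
    exact Finset.sum_nonneg fun i _ => mul_nonneg (hl i).le (hge i ω)
  refine ⟨posi_gambles (fun x hx => hx.1) ⟨n, f, l, hf, hl, rfl⟩, hnonneg, ?_⟩
  intro h0
  obtain ⟨ω, hω⟩ : ∃ ω, f 0 ω ≠ 0 := by
    by_contra hc
    push_neg at hc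
    exact (hf 0).2.2 (funext hc)
  have hfω : 0 < f 0 ω := lt_of_le_of_ne (hge 0 ω) (Ne.symm hω)
  have : (∑ i, l i • f i) ω = 0 := by rw [h0]; rfl
  rw [Finset.sum_apply] at this
  have hle : l 0 * f 0 ω ≤ 0 := by
    calc l 0 * f 0 ω = (l 0 • f 0) ω := rfl
    _ ≤ ∑ i, (l i • f i) ω := Finset.single_le_sum
        (f := fun i => (l i • f i) ω)
        (fun i _ => by simpa using mul_nonneg (hl i).le (hge i ω)) (Finset.mem_univ 0)
    _ = 0 := this
  nlinarith [hl 0]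

/-- Avoiding-partial-loss (for posi) means no element of the natural extension
is ≤ 0. -/
lemma apl_not_nonpos {D : Set (Ω → ℝ)} (hD : D ⊆ Gambles Ω)
    (h : AvoidsPartialLoss (Ω := Ω) posi D) {x : Ω → ℝ}
    (hx : x ∈ posi (D ∪ Lpos Ω)) : ¬ x ≤ 0 := by
  intro hle
  have hxg : x ∈ Gambles Ω :=
    posi_gambles (Set.union_subset hD (fun y hy => hy.1)) hx
  have : x ∈ Lneg0 Ω ∩ natExt posi D := ⟨⟨hxg, hle⟩, hx⟩
  rw [h] at this
  exact this

lemma apl_not_nonpos_self {D : Set (Ω → ℝ)} (hD : D ⊆ Gambles Ω)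
    (h : AvoidsPartialLoss (Ω := Ω) posi D) {x : Ω → ℝ} (hx : x ∈ D) : ¬ x ≤ 0 :=
  apl_not_nonpos hD h (mem_posi_single (Or.inl hx))

end Aux2
section Aux3
variable {Ω : Type*} {𝓑 : Set (Set Ω)} {Dc : Set Ω → Set (Ω → ℝ)}

lemma part_cover (hpart : Setoid.IsPartition 𝓑) (ω : Ω) : ∃ B ∈ 𝓑, ω ∈ B := by
  obtain ⟨B, ⟨hB, hω⟩, -⟩ := hpart.2 ω
  exact ⟨B, hB, hω⟩

lemma part_disj (hpart : Setoid.IsPartition 𝓑) {B B' : Set Ω} (hB : B ∈ 𝓑) (hB' : B' ∈ 𝓑)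
    (hne : B ≠ B') {ω : Ω} (hω : ω ∈ B) : ω ∉ B' := by
  intro hω'
  obtain ⟨b, -, huniq⟩ := hpart.2 ω
  exact hne ((huniq B ⟨hB, hω⟩).trans (huniq B' ⟨hB', hω'⟩).symm)

/-- indicator distributes over the `posi` sum. -/
lemma indicator_sum (B : Set Ω) {ι : Type*} (s : Finset ι) (f : ι → Ω → ℝ) :
    B.indicator (∑ i ∈ s, f i) = ∑ i ∈ s, B.indicator (f i) := by
  funext ω
  by_cases h : ω ∈ B
  · simp [Set.indicator_of_mem h, Finset.sum_apply]
  · simp [Set.indicator_of_notMem h, Finset.sum_apply]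

lemma indicator_smul' (B : Set Ω) (c : ℝ) (f : Ω → ℝ) :
    B.indicator (c • f) = c • B.indicator f := by
  funext ω
  by_cases h : ω ∈ B <;>
    simp [Set.indicator_of_mem, Set.indicator_of_notMem, h]

/-- Functions in `posi` of a set of 𝓑-measurable gambles take equal values on blocks. -/
lemma posi_meas_eq {G : Set (Ω → ℝ)} (hG : G ⊆ Lmeas 𝓑) {x : Ω → ℝ} (hx : x ∈ posi G)
    {B : Set Ω} (hB : B ∈ 𝓑) {ω ω' : Ω} (hω : ω ∈ B) (hω' : ω' ∈ B) : x ω = x ω' := by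
  obtain ⟨n, f, l, hf, hl, rfl⟩ := hx
  rw [Finset.sum_apply, Finset.sum_apply]
  refine Finset.sum_congr rfl fun i _ => ?_
  have := (hG (hf i)).2 B hB ω hω ω' hω'
  simp [this]

/-- Elements of a coherent-relative `Dc B` are not ≤ 0, in particular nonzero. -/
lemma Dc_not_nonpos (hDc : ∀ B ∈ 𝓑, Dc B ⊆ Lcond B ∧ CoherentRel posi (Lcond B) (Dc B))
    {B : Set Ω} (hB : B ∈ 𝓑) {x : Ω → ℝ} (hx : x ∈ Dc B) : ¬ x ≤ 0 :=
  apl_not_nonpos (fun y hy => ((hDc B hB).1 hy).1) (hDc B hB).2.1 (mem_posi_single (Or.inl hx))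

lemma Dc_scale (hDc : ∀ B ∈ 𝓑, Dc B ⊆ Lcond B ∧ CoherentRel posi (Lcond B) (Dc B))
    {B : Set Ω} (hB : B ∈ 𝓑) {x : Ω → ℝ} (hx : x ∈ Dc B) {c : ℝ} (hc : 0 < c) :
    c • x ∈ Dc B := by
  obtain ⟨hsub, hapl, hcoh⟩ := hDc B hB
  refine hcoh ⟨?_, smul_mem_posi (mem_posi_single (Or.inl hx)) hc⟩
  obtain ⟨hxg, hxind⟩ := hsub hx
  exact ⟨gambles_smul hxg c, by rw [indicator_smul' , ← hxind]⟩

/-- posi of condAgg is inside condAgg. -/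
lemma posi_condAgg (hpart : Setoid.IsPartition 𝓑)
    (hDc : ∀ B ∈ 𝓑, Dc B ⊆ Lcond B ∧ CoherentRel posi (Lcond B) (Dc B)) :
    posi (condAgg 𝓑 Dc) ⊆ condAgg 𝓑 Dc := by
  intro g hg
  obtain ⟨n, f, l, hf, hl, rfl⟩ := hg
  have hgG : (∑ i, l i • f i) ∈ Gambles Ω :=
    posi_gambles (fun y hy => hy.1) ⟨n, f, l, hf, hl, rfl⟩
  -- components
  have hcomp : ∀ B ∈ 𝓑, (B.indicator (∑ i, l i • f i) ∈ Dc B ∪ {0}) ∧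
      ((∃ j, B.indicator (f j) ≠ 0) → B.indicator (∑ i, l i • f i) ∈ Dc B) := by
    intro B hB
    rw [indicator_sum]
    classical
    set s : Finset (Fin (n+1)) := Finset.univ.filter (fun i => B.indicator (f i) ≠ 0) with hs
    have hsummem : ∀ i ∈ s, B.indicator (l i • f i) ∈ Dc B := by
      intro i hi
      have hne : B.indicator (f i) ≠ 0 := (Finset.mem_filter.1 hi).2
      have : B.indicator (f i) ∈ Dc B := by
        rcases (hf i).2.2 B hB with h | h
        · exact h
        · exact absurd h hne
      rw [indicator_smul']
      exact Dc_scale hDc hB this (hl i)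
    have hzero : ∀ i ∈ Finset.univ \ s, B.indicator (l i • f i) = 0 := by
      intro i hi
      have : B.indicator (f i) = 0 := by
        have := Finset.mem_sdiff.1 hi
        simp only [hs, Finset.mem_filter, Finset.mem_univ, true_and, not_not] at this
        exact this
      rw [indicator_smul', this, smul_zero]
    have hsplit : (∑ i, B.indicator (l i • f i)) = ∑ i ∈ s, B.indicator (l i • f i) := by
      rw [← Finset.sum_subset (Finset.subset_univ s)]
      intro i _ hi
      exact hzero i (Finset.mem_sdiff.2 ⟨Finset.mem_univ i, hi⟩)
    rw [hsplit]
    rcases Finset.eq_empty_or_nonempty s with h | h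
    · constructor
      · right; simp [h]
      · rintro ⟨j, hj⟩
        have : j ∈ s := by rw [hs]; exact Finset.mem_filter.2 ⟨Finset.mem_univ j, hj⟩
        rw [h] at this
        exact absurd this (Finset.notMem_empty j)
    · refine ⟨Or.inl ?_, fun _ => ?_⟩ <;>
      [skip; skip]
      all_goals
      have hmem : (∑ i ∈ s, B.indicator (l i • f i)) ∈ posi (Dc B ∪ Lpos Ω) :=
        sum_mem_posi h fun i hi => mem_posi_single (Or.inl (hsummem i hi))
      refine (hDc B hB).2.2 ⟨?_, hmem⟩
      refine ⟨gambles_sum _ _ fun i _ => gambles_indicator (gambles_smul (hf i).1 _) B, ?_⟩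
      rw [indicator_sum]
      refine Finset.sum_congr rfl fun i _ => ?_
      rw [Set.indicator_indicator, Set.inter_self]
  refine ⟨hgG, ?_, fun B hB => (hcomp B hB).1⟩
  -- nonzero
  intro h0
  obtain ⟨ω, hω⟩ : ∃ ω, f 0 ω ≠ 0 := by
    by_contra hc
    push_neg at hc
    exact (hf 0).2.1 (funext hc)
  obtain ⟨B, hB, hωB⟩ := part_cover hpart ω
  have hfind : B.indicator (f 0) ≠ 0 := by
    intro hcontra
    have := congrFun hcontra ω
    rw [Set.indicator_of_mem hωB] at this
    exact hω this
  have hf0 : B.indicator (f 0) ∈ Dc B := by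
    rcases (hf 0).2.2 B hB with h | h
    · exact h
    · exact absurd h hfind
  -- B.indicator of the total sum is in Dc B, but equals 0
  have hcompB := (hcomp B hB).2 ⟨0, hfind⟩
  rw [h0] at hcompB
  rw [Set.indicator_zero'] at hcompB
  exact Dc_not_nonpos hDc hB hcompB le_rfl

end Aux3
section Aux4
variable {Ω : Type*} {𝓑 : Set (Set Ω)} {Dc : Set Ω → Set (Ω → ℝ)} {DB : Set (Ω → ℝ)}

lemma part_nonempty (hpart : Setoid.IsPartition 𝓑) {B : Set Ω} (hB : B ∈ 𝓑) :
    ∃ ω, ω ∈ B := by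
  by_contra h
  push_neg at h
  exact hpart.1 (by rwa [Set.eq_empty_iff_forall_notMem.2 h] at hB)

/-- If `b` is (0 or) a conditional-aggregate gamble that is bounded above by a
negative constant on a block, we get a contradiction. -/
lemma block_le (hpart : Setoid.IsPartition 𝓑)
    (hDc : ∀ B ∈ 𝓑, Dc B ⊆ Lcond B ∧ CoherentRel posi (Lcond B) (Dc B))
    {b : Ω → ℝ} (hb : b = 0 ∨ b ∈ condAgg 𝓑 Dc) {B : Set Ω} (hB : B ∈ 𝓑)
    {r : ℝ} (hr : r < 0) (hble : ∀ ω ∈ B, b ω ≤ r) : False := by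
  obtain ⟨ω₀, hω₀⟩ := part_nonempty hpart hB
  have hbω : b ω₀ < 0 := lt_of_le_of_lt (hble ω₀ hω₀) hr
  rcases hb with rfl | hb
  · exact absurd rfl hbω.ne
  have hy_le : B.indicator b ≤ 0 := by
    intro ω
    by_cases h : ω ∈ B
    · rw [Set.indicator_of_mem h]; exact (hble ω h).trans hr.le
    · simp [Set.indicator_of_notMem h]
  have hy_ne : B.indicator b ≠ 0 := by
    intro h
    have := congrFun h ω₀
    rw [Set.indicator_of_mem hω₀] at this
    exact hbω.ne this
  rcases hb.2.2 B hB with h | h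
  · exact Dc_not_nonpos hDc hB h hy_le
  · exact hy_ne h

/-- A conditional-aggregate gamble is not ≤ 0. -/
lemma condAgg_not_nonpos (hpart : Setoid.IsPartition 𝓑)
    (hDc : ∀ B ∈ 𝓑, Dc B ⊆ Lcond B ∧ CoherentRel posi (Lcond B) (Dc B))
    {b : Ω → ℝ} (hb : b ∈ condAgg 𝓑 Dc) : ¬ b ≤ 0 := by
  intro hle
  refine hb.2.1 (funext fun ω => ?_)
  obtain ⟨B, hB, hωB⟩ := part_cover hpart ω
  have hind : B.indicator b = 0 := by
    rcases hb.2.2 B hB with h | h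
    · exact absurd (fun ω' => by
        by_cases hω' : ω' ∈ B
        · rw [Set.indicator_of_mem hω']; exact hle ω'
        · simp [Set.indicator_of_notMem hω']) (Dc_not_nonpos hDc hB h)
    · exact h
  have := congrFun hind ω
  rwa [Set.indicator_of_mem hωB] at this

lemma indicator_add3 (B : Set Ω) (a b c : Ω → ℝ) :
    B.indicator (a + b + c) = B.indicator a + B.indicator b + B.indicator c := by
  funext ω
  by_cases h : ω ∈ B <;>
    simp [Set.indicator_of_mem, Set.indicator_of_notMem, h]

/-- The key non-triviality fact: a sum of parts, at least one of which is present,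
cannot be 0. -/
lemma sum_parts_ne_zero (hpart : Setoid.IsPartition 𝓑)
    (hDBsub : DB ⊆ Lmeas 𝓑) (hDBcoh : CoherentRel posi (Lmeas 𝓑) DB)
    (hDc : ∀ B ∈ 𝓑, Dc B ⊆ Lcond B ∧ CoherentRel posi (Lcond B) (Dc B))
    {a b c : Ω → ℝ} (ha : a = 0 ∨ a ∈ posi DB) (hb : b = 0 ∨ b ∈ condAgg 𝓑 Dc)
    (hc : c = 0 ∨ c ∈ Lpos Ω)
    (hpres : a ∈ posi DB ∨ b ∈ posi (condAgg 𝓑 Dc) ∨ c ∈ posi (Lpos Ω)) :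
    a + b + c ≠ 0 := by
  intro h0
  have hDBG : DB ⊆ Gambles Ω := fun x hx => (hDBsub hx).1
  have hcle : ∀ ω, 0 ≤ c ω := by
    rcases hc with rfl | hc
    · intro ω; exact le_rfl
    · exact fun ω => hc.2.1 ω
  -- a is nonpositive everywhere
  have haneg : ∀ ω, a ω ≤ 0 := by
    intro ω
    by_contra hpos
    push_neg at hpos
    obtain ⟨B, hB, hωB⟩ := part_cover hpart ω
    refine block_le hpart hDc hb hB (r := -(a ω)) (by linarith) fun ω' hω' => ?_
    have haeq : a ω' = a ω := by
      rcases ha with rfl | ha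
      · rfl
      · exact posi_meas_eq hDBsub ha hB hω' hωB
    have h0' : a ω' + b ω' + c ω' = 0 := by
      have := congrFun h0 ω'
      simpa using this
    have := hcle ω'
    linarith [haeq ▸ h0']
  -- hence a = 0 (else APL for DB is violated)
  have ha0 : a = 0 := by
    rcases ha with rfl | ha
    · rfl
    · exact absurd (fun ω => haneg ω)
        (apl_not_nonpos hDBG hDBcoh.1 (posi_mono Set.subset_union_left ha))
  subst ha0
  -- then b ≤ 0, hence b = 0
  have hb0 : b = 0 := by
    rcases hb with rfl | hb
    · rfl
    · refine absurd (fun ω => ?_) (condAgg_not_nonpos hpart hDc hb)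
      have := congrFun h0 ω
      simp only [Pi.add_apply, Pi.zero_apply] at this
      have := hcle ω
      simp only [Pi.zero_apply]
      linarith
  subst hb0
  have hc0 : c = 0 := by
    funext ω
    have := congrFun h0 ω
    simpa using this
  subst hc0
  rcases hpres with h | h | h
  · exact apl_not_nonpos hDBG hDBcoh.1 (posi_mono Set.subset_union_left h) le_rfl
  · exact (posi_condAgg hpart hDc h).2.1 rfl
  · exact (posi_Lpos h).2.2 rfl

end Aux4
section Key
variable {Ω : Type*} {𝓑 : Set (Set Ω)} {Dc : Set Ω → Set (Ω → ℝ)} {DB : Set (Ω → ℝ)}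

lemma key_meas (hpart : Setoid.IsPartition 𝓑)
    (hDBsub : DB ⊆ Lmeas 𝓑) (hDBcoh : CoherentRel posi (Lmeas 𝓑) DB)
    (hDc : ∀ B ∈ 𝓑, Dc B ⊆ Lcond B ∧ CoherentRel posi (Lcond B) (Dc B))
    {g : Ω → ℝ} (hg : g ∈ posi (DB ∪ condAgg 𝓑 Dc ∪ Lpos Ω)) (hgm : g ∈ Lmeas 𝓑) :
    g ∈ DB := by
  have hDBG : DB ⊆ Gambles Ω := fun x hx => (hDBsub hx).1
  obtain ⟨a, b, c, ha, hb0, hc0, hpres, hsum⟩ := posi_decomp3 hg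
  have hb : b = 0 ∨ b ∈ condAgg 𝓑 Dc := hb0.imp id (fun h => posi_condAgg hpart hDc h)
  have hc : c = 0 ∨ c ∈ Lpos Ω := hc0.imp id (fun h => posi_Lpos h)
  have hcle : ∀ ω, 0 ≤ c ω := by
    rcases hc with rfl | hc
    · intro ω; exact le_rfl
    · exact fun ω => hc.2.1 ω
  -- step 1 : a ≤ g pointwise
  have hag : ∀ ω, a ω ≤ g ω := by
    intro ω
    by_contra hlt
    push_neg at hlt
    obtain ⟨B, hB, hωB⟩ := part_cover hpart ω
    refine block_le hpart hDc hb hB (r := g ω - a ω) (by linarith) fun ω' hω' => ?_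
    have haeq : a ω' = a ω := by
      rcases ha with rfl | ha
      · rfl
      · exact posi_meas_eq hDBsub ha hB hω' hωB
    have hgeq : g ω' = g ω := hgm.2 B hB ω' hω' ω hωB
    have h0' : g ω' = a ω' + b ω' + c ω' := by
      have := congrFun hsum ω'
      simpa using this
    have := hcle ω'
    rw [hgeq, haeq] at h0'
    linarith
  rcases ha with rfl | ha
  · -- a = 0 : g is a positive gamble
    have hgne : g ≠ 0 := by
      rw [hsum]
      exact sum_parts_ne_zero hpart hDBsub hDBcoh hDc (Or.inl rfl) hb hc hpres
    have hgpos : g ∈ Lpos Ω := ⟨hgm.1, fun ω => by simpa using hag ω, hgne⟩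
    exact hDBcoh.2 ⟨hgm, mem_posi_single (Or.inr hgpos)⟩
  · -- a ∈ posi DB : g dominates a
    have hgmem : g ∈ posi (DB ∪ Lpos Ω) := by
      by_cases hga : g - a = 0
      · have : g = a := by
          funext ω
          have := congrFun hga ω
          simp only [Pi.sub_apply, Pi.zero_apply, sub_eq_zero] at this
          exact this
        rw [this]
        exact posi_mono Set.subset_union_left ha
      · have hdiff : g - a ∈ Lpos Ω := by
          refine ⟨gambles_sub hgm.1 (posi_gambles hDBG ha), fun ω => ?_, hga⟩
          simpa using sub_nonneg.2 (hag ω)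
        have := add_mem_posi (posi_mono (Set.subset_union_left (t := Lpos Ω)) ha)
          (mem_posi_single (Or.inr hdiff))
        have heq : a + (g - a) = g := by abel
        rwa [heq] at this
    exact hDBcoh.2 ⟨hgm, hgmem⟩

lemma key_cond (hpart : Setoid.IsPartition 𝓑)
    (hDBsub : DB ⊆ Lmeas 𝓑) (hDBcoh : CoherentRel posi (Lmeas 𝓑) DB)
    (hDc : ∀ B ∈ 𝓑, Dc B ⊆ Lcond B ∧ CoherentRel posi (Lcond B) (Dc B))
    {B₀ : Set Ω} (hB₀ : B₀ ∈ 𝓑)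
    {g : Ω → ℝ} (hg : g ∈ posi (DB ∪ condAgg 𝓑 Dc ∪ Lpos Ω)) (hgc : g ∈ Lcond B₀) :
    g ∈ Dc B₀ := by
  have hDBG : DB ⊆ Gambles Ω := fun x hx => (hDBsub hx).1
  obtain ⟨a, b, c, ha, hb0, hc0, hpres, hsum⟩ := posi_decomp3 hg
  have hb : b = 0 ∨ b ∈ condAgg 𝓑 Dc := hb0.imp id (fun h => posi_condAgg hpart hDc h)
  have hc : c = 0 ∨ c ∈ Lpos Ω := hc0.imp id (fun h => posi_Lpos h)
  have hcle : ∀ ω, 0 ≤ c ω := by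
    rcases hc with rfl | hc
    · intro ω; exact le_rfl
    · exact fun ω => hc.2.1 ω
  have hgz : ∀ ω, ω ∉ B₀ → g ω = 0 := by
    intro ω hω
    have := congrFun hgc.2 ω
    rwa [Set.indicator_of_notMem hω] at this
  -- step 1 : a ≤ 0 outside B₀
  have haneg : ∀ ω, ω ∉ B₀ → a ω ≤ 0 := by
    intro ω hω
    by_contra hpos
    push_neg at hpos
    obtain ⟨B, hB, hωB⟩ := part_cover hpart ω
    have hBne : B ≠ B₀ := fun h => hω (h ▸ hωB)
    refine block_le hpart hDc hb hB (r := -(a ω)) (by linarith) fun ω' hω' => ?_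
    have haeq : a ω' = a ω := by
      rcases ha with rfl | ha
      · rfl
      · exact posi_meas_eq hDBsub ha hB hω' hωB
    have hgz' : g ω' = 0 := hgz ω' (part_disj hpart hB hB₀ hBne hω')
    have h0' : g ω' = a ω' + b ω' + c ω' := by
      have := congrFun hsum ω'
      simpa using this
    have := hcle ω'
    rw [hgz', haeq] at h0'
    linarith
  -- g is the B₀-indicator of a + b + c
  have hgind : g = B₀.indicator a + B₀.indicator b + B₀.indicator c := by
    rw [hgc.2, hsum, indicator_add3]
  -- analyse the three components
  have hya : B₀.indicator a = 0 ∨ B₀.indicator a ∈ Dc B₀ := by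
    rcases ha with rfl | ha
    · left; simp
    · right
      have hanp : ¬ a ≤ 0 :=
        apl_not_nonpos hDBG hDBcoh.1 (posi_mono Set.subset_union_left ha)
      have : ∃ ω₁, 0 < a ω₁ := by
        by_contra hcon
        push_neg at hcon
        exact hanp fun ω => hcon ω
      obtain ⟨ω₁, hω₁⟩ := this
      have hω₁B : ω₁ ∈ B₀ := by
        by_contra h
        exact absurd (haneg ω₁ h) (not_le.2 hω₁)
      have hconst : ∀ ω ∈ B₀, a ω = a ω₁ := fun ω hω =>
        posi_meas_eq hDBsub ha hB₀ hω hω₁B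
      have hpos : B₀.indicator a ∈ Lpos Ω := by
        refine ⟨gambles_indicator (posi_gambles hDBG ha) B₀, fun ω => ?_, ?_⟩
        · by_cases h : ω ∈ B₀
          · rw [Set.indicator_of_mem h, hconst ω h]; simpa using hω₁.le
          · simp [Set.indicator_of_notMem h]
        · intro hcon
          have := congrFun hcon ω₁
          rw [Set.indicator_of_mem hω₁B] at this
          exact hω₁.ne' this
      refine (hDc B₀ hB₀).2.2 ⟨⟨hpos.1, ?_⟩, mem_posi_single (Or.inr hpos)⟩
      rw [Set.indicator_indicator, Set.inter_self]
  have hyb : B₀.indicator b = 0 ∨ B₀.indicator b ∈ Dc B₀ := by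
    rcases hb with rfl | hbc
    · left; simp
    · rcases hbc.2.2 B₀ hB₀ with h | h
      · right; exact h
      · left; exact h
  have hyc : B₀.indicator c = 0 ∨ B₀.indicator c ∈ Lpos Ω := by
    by_cases h : B₀.indicator c = 0
    · left; exact h
    · right
      rcases hc with rfl | hcp
      · exact absurd (by simp) h
      · refine ⟨gambles_indicator hcp.1 B₀, fun ω => ?_, h⟩
        by_cases hω : ω ∈ B₀
        · rw [Set.indicator_of_mem hω]; simpa using hcle ω
        · simp [Set.indicator_of_notMem hω]
  -- g is nonzero
  have hgne : g ≠ 0 := by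
    rw [hsum]
    exact sum_parts_ne_zero hpart hDBsub hDBcoh hDc ha hb hc hpres
  -- combine
  have hgmem : g ∈ posi (Dc B₀ ∪ Lpos Ω) := by
    have h1 : B₀.indicator a = 0 ∨ B₀.indicator a ∈ posi (Dc B₀ ∪ Lpos Ω) :=
      hya.imp id (fun h => mem_posi_single (Or.inl h))
    have h2 : B₀.indicator b = 0 ∨ B₀.indicator b ∈ posi (Dc B₀ ∪ Lpos Ω) :=
      hyb.imp id (fun h => mem_posi_single (Or.inl h))
    have h3 : B₀.indicator c = 0 ∨ B₀.indicator c ∈ posi (Dc B₀ ∪ Lpos Ω) :=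
      hyc.imp id (fun h => mem_posi_single (Or.inr h))
    rw [hgind]
    rcases h1 with h1 | h1 <;> rcases h2 with h2 | h2 <;> rcases h3 with h3 | h3
    · exact absurd (by rw [hgind, h1, h2, h3]; simp) hgne
    · rw [h1, h2]; simpa using h3
    · rw [h1, h3]; simpa using h2
    · rw [h1]; simpa using add_mem_posi h2 h3
    · rw [h2, h3]; simpa using h1
    · rw [h2]; simpa using add_mem_posi h1 h3
    · rw [h3]; simpa using add_mem_posi h1 h2
    · exact add_mem_posi (add_mem_posi h1 h2) h3
  exact (hDc B₀ hB₀).2.2 ⟨hgc, hgmem⟩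

end Key

/-- under the stated conditions, the marginal extension
`D' = E_κ(D_𝓑 ∪ D|𝓑)` has marginal `D_𝓑` and conditionals `D|B` for every `B ∈ 𝓑`. -/
theorem stmt11 {Ω : Type*} [Nonempty Ω] (𝓑 : Set (Set Ω)) (hpart : Setoid.IsPartition 𝓑)
    (κ : Set (Ω → ℝ) → Set (Ω → ℝ)) (hκ : InKd κ)
    (hdom : ∀ G ⊆ Gambles Ω, natExt κ G ⊆ natExt posi G)
    (DB : Set (Ω → ℝ)) (hDBsub : DB ⊆ Lmeas 𝓑)
    (hDBcoh : CoherentRel posi (Lmeas 𝓑) DB)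
    (Dc : Set Ω → Set (Ω → ℝ))
    (hDc : ∀ B ∈ 𝓑, Dc B ⊆ Lcond B ∧ CoherentRel posi (Lcond B) (Dc B)) :
    natExt κ (DB ∪ condAgg 𝓑 Dc) ∩ Lmeas 𝓑 = DB ∧
      ∀ B ∈ 𝓑, natExt κ (DB ∪ condAgg 𝓑 Dc) ∩ Lcond B = Dc B := by
  have hDBG : DB ⊆ Gambles Ω := fun x hx => (hDBsub hx).1
  have hAG : DB ∪ condAgg 𝓑 Dc ⊆ Gambles Ω :=
    Set.union_subset hDBG (fun x hx => hx.1)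
  have hupper : natExt κ (DB ∪ condAgg 𝓑 Dc) ⊆ posi (DB ∪ condAgg 𝓑 Dc ∪ Lpos Ω) :=
    hdom _ hAG
  have hlower : DB ∪ condAgg 𝓑 Dc ∪ Lpos Ω ⊆ natExt κ (DB ∪ condAgg 𝓑 Dc) :=
    hκ.1.extensive _ (Set.union_subset hAG (fun x hx => hx.1))
  have hCA : ∀ B ∈ 𝓑, Dc B ⊆ condAgg 𝓑 Dc := by
    intro B hB f hf
    have hfc : f ∈ Lcond B := (hDc B hB).1 hf
    refine ⟨hfc.1, fun h0 => Dc_not_nonpos hDc hB (h0 ▸ hf) le_rfl, fun B' hB' => ?_⟩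
    by_cases hBB : B' = B
    · subst hBB
      left
      rw [← hfc.2]
      exact hf
    · right
      have : B'.indicator f = 0 := by
        funext ω
        by_cases hω : ω ∈ B'
        · rw [Set.indicator_of_mem hω]
          have hωB : ω ∉ B := part_disj hpart hB' hB hBB hω
          have := congrFun hfc.2 ω
          rwa [Set.indicator_of_notMem hωB] at this
        · simp [Set.indicator_of_notMem hω]
      exact this
  constructor
  · apply Set.Subset.antisymm
    · rintro g ⟨hgD, hgm⟩
      exact key_meas hpart hDBsub hDBcoh hDc (hupper hgD) hgm
    · intro g hg
      exact ⟨hlower (Or.inl (Or.inl hg)), hDBsub hg⟩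
  · intro B hB
    apply Set.Subset.antisymm
    · rintro g ⟨hgD, hgc⟩
      exact key_cond hpart hDBsub hDBcoh hDc hB (hupper hgD) hgc
    · intro g hg
      exact ⟨hlower (Or.inl (Or.inr (hCA B hB hg))), (hDc B hB).1 hg⟩
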